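/- Let (X,τ) be a Hausdorff space. Suppose there exist a dense subset Q of (X,τ) and an asymmetric binary relation R on X such that (X,τ) is R-bidirected along Q. Then (X,τ) is not a continuous open image of the Sorgenfrey line; that is, there is no surjection from the Sorgenfrey line onto X that is continuous and an open map. -/

import Mathlib

open Set Filter Topology TopologicalSpace Function

noncomputable section

/-- The Sorgenfrey topology on `ℝ`: generated by half-open intervals `[a, b)`. -/
def sorgenfreyTop : TopologicalSpace ℝ :=
  TopologicalSpace.generateFrom {s : Set ℝ | ∃ a b : ℝ, s = Set.Ico a b}

/-- The initial segment `p↾n` of an infinite sequence, as a list. -/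
def restr (p : ℕ → ℕ) (n : ℕ) : List ℕ := (List.range n).map p

/-- `fruit V p = ⋂ n, V (p↾n)`. -/
def fruit {X : Type*} (V : List ℕ → Set X) (p : ℕ → ℕ) : Set X := ⋂ n, V (restr p n)

/-- A Souslin scheme is covering if `V ⟨⟩ = X` and `V a = ⋃ n, V (a ⌢ n)`. -/
def Covering {X : Type*} (V : List ℕ → Set X) : Prop :=
  V [] = Set.univ ∧ ∀ a : List ℕ, V a = ⋃ n : ℕ, V (a ++ [n])

/-- A Souslin scheme is complete if every fruit is nonempty. -/
def CompleteScheme {X : Type*} (V : List ℕ → Set X) : Prop :=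
  ∀ q : ℕ → ℕ, (fruit V q).Nonempty

/-- A Souslin scheme has strict branches if every fruit is a singleton. -/
def StrictBranches {X : Type*} (V : List ℕ → Set X) : Prop :=
  ∀ q : ℕ → ℕ, ∃ x : X, fruit V q = {x}

/-- A Souslin scheme is locally strict. -/
def LocallyStrict {X : Type*} (V : List ℕ → Set X) : Prop :=
  (∀ a : List ℕ, V a = ⋃ n : ℕ, V (a ++ [n])) ∧
  ∀ a : List ℕ, ∀ m k : ℕ, m ≠ k → V (a ++ [m]) ∩ V (a ++ [k]) = ∅

/-- `q ◁ p` for infinite sequences: `q↾n = p↾n` and `q n < p n` for some `n`. -/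
def tri (q p : ℕ → ℕ) : Prop := ∃ n : ℕ, restr q n = restr p n ∧ q n < p n

/-- `q ⊴ p` for infinite sequences. -/
def trieq (q p : ℕ → ℕ) : Prop := tri q p ∨ q = p

/-- `q ◁ s` where `q` is an infinite sequence and `s` a finite one. -/
def triL (q : ℕ → ℕ) (s : List ℕ) : Prop :=
  ∃ n : ℕ, ∃ h : n < s.length, restr q n = s.take n ∧ q n < s.get ⟨n, h⟩

/-- `rsequences(q, n) = {p | q ◁ p ∧ q↾n = p↾n}`. -/
def rsequences (q : ℕ → ℕ) (n : ℕ) : Set (ℕ → ℕ) :=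
  {p | tri q p ∧ restr q n = restr p n}

/-- `rsubtree(q, n)`: finite sequences `s` such that `q↾n ⊏ s` and `q ◁ s`. -/
def rsubtree (q : ℕ → ℕ) (n : ℕ) : Set (List ℕ) :=
  {s | restr q n <+: s ∧ restr q n ≠ s ∧ triL q s}

/-- `cut(V, q, n) = ⋃ {fruit(V, p) : p ∈ rsequences(q, n)}`. -/
def cut {X : Type*} (V : List ℕ → Set X) (q : ℕ → ℕ) (n : ℕ) : Set X :=
  ⋃ p ∈ rsequences q n, fruit V p

/-- `branches(V, x) = {q | x ∈ fruit(V, q)}`. -/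
def branches {X : Type*} (V : List ℕ → Set X) (x : X) : Set (ℕ → ℕ) :=
  {q | x ∈ fruit V q}

/-- `q` is a `τ`-base branch of `x` in `V`: `q ∈ branches(V, x)` and
`{cut(V, q, m) ∪ {x} : m ∈ ℕ}` is a neighborhood base of open sets at `x`. -/
def IsBaseBranch {X : Type*} (τ : TopologicalSpace X) (V : List ℕ → Set X)
    (q : ℕ → ℕ) (x : X) : Prop :=
  x ∈ fruit V q ∧ (∀ m : ℕ, IsOpen[τ] (cut V q m ∪ {x})) ∧
    (@nhds X τ x).HasBasis (fun _ : ℕ => True) (fun m : ℕ => cut V q m ∪ {x})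

/-- `BB(V, x, τ)`: the set of `τ`-base branches of `x` in `V`. -/
def BB {X : Type*} (τ : TopologicalSpace X) (V : List ℕ → Set X) (x : X) : Set (ℕ → ℕ) :=
  {q | IsBaseBranch τ V q x}

/-- A Sorgenfrey base for a space: an open complete covering Souslin scheme
satisfying (S1) and (S2). -/
def IsSorgenfreyBase {X : Type*} (τ : TopologicalSpace X) (V : List ℕ → Set X) : Prop :=
  (∀ a : List ℕ, IsOpen[τ] (V a)) ∧ CompleteScheme V ∧ Covering V ∧
  (∀ x : X, ∀ q ∈ branches V x, ∀ n : ℕ, ∃ t ∈ BB τ V x, restr t n = restr q n) ∧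
  (∀ q : ℕ → ℕ, ∃ z : X, q ∈ BB τ V z)

/-- The Souslin scheme `S` on the Baire set: `S a = {p | a ⊑ p}`. -/
def SchemeS (a : List ℕ) : Set (ℕ → ℕ) := {p | restr p a.length = a}

/-- The topology `σ_𝕊` on `ℕ → ℕ` generated by the base
`{cut(S, p, n) ∪ {p} : p ∈ ℕ → ℕ, n ∈ ℕ}`. -/
def sigmaS : TopologicalSpace (ℕ → ℕ) :=
  TopologicalSpace.generateFrom
    {U : Set (ℕ → ℕ) | ∃ p : ℕ → ℕ, ∃ n : ℕ, U = cut SchemeS p n ∪ {p}}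

/-- An open neighborhood `U` of `x` is `R`-right along `Q`. -/
def RightNbhd {X : Type*} (τ : TopologicalSpace X) (Q : Set X) (R : X → X → Prop)
    (x : X) (U : Set X) : Prop :=
  IsOpen[τ] U ∧ x ∈ U ∧ ∀ y ∈ (U \ {x}) ∩ Q, R x y

/-- An open neighborhood `U` of `x` is `R`-left along `Q`. -/
def LeftNbhd {X : Type*} (τ : TopologicalSpace X) (Q : Set X) (R : X → X → Prop)
    (x : X) (U : Set X) : Prop :=
  IsOpen[τ] U ∧ x ∈ U ∧ ∀ y ∈ (U \ {x}) ∩ Q, R y x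

/-- The point `x` looks to the `R`-right along `Q`. -/
def LooksRight {X : Type*} (τ : TopologicalSpace X) (Q : Set X) (R : X → X → Prop)
    (x : X) : Prop :=
  (∃ U : Set X, RightNbhd τ Q R x U) ∧
  ∀ U : Set X, IsOpen[τ] U → x ∈ U →
    ∃ y ∈ (U \ {x}) ∩ Q, {z | R z y} ∈ @nhds X τ x

/-- The point `x` looks to the `R`-left along `Q`. -/
def LooksLeft {X : Type*} (τ : TopologicalSpace X) (Q : Set X) (R : X → X → Prop)
    (x : X) : Prop :=
  (∃ U : Set X, LeftNbhd τ Q R x U) ∧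
  ∀ U : Set X, IsOpen[τ] U → x ∈ U →
    ∃ y ∈ (U \ {x}) ∩ Q, {z | R y z} ∈ @nhds X τ x

/-- `(X, τ)` is `R`-bidirected along `Q`. -/
def Bidirected {X : Type*} (τ : TopologicalSpace X) (Q : Set X) (R : X → X → Prop) : Prop :=
  ∃ Al Ar : Set X, @Dense X τ Al ∧ @Dense X τ Ar ∧ Al ∪ Ar = Set.univ ∧ Al ∩ Ar = ∅ ∧
    (∀ x ∈ Ar, LooksRight τ Q R x) ∧ (∀ x ∈ Al, LooksLeft τ Q R x)

lemma sorg_tail_aux {U : Set ℝ}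
    (h : TopologicalSpace.GenerateOpen {s : Set ℝ | ∃ a b : ℝ, s = Set.Ico a b} U) :
    ∀ r ∈ U, ∃ δ > 0, Set.Ico r (r + δ) ⊆ U := by
  induction h with
  | basic s hs =>
    obtain ⟨a, b, rfl⟩ := hs
    intro r hr
    exact ⟨b - r, by linarith [hr.1, hr.2],
      fun t ht => ⟨le_trans hr.1 ht.1, by linarith [ht.2]⟩⟩
  | univ => exact fun r _ => ⟨1, one_pos, fun t _ => trivial⟩
  | inter s t _ _ ihs iht =>
    intro r hr
    obtain ⟨δ₁, hδ₁, h₁⟩ := ihs r hr.1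
    obtain ⟨δ₂, hδ₂, h₂⟩ := iht r hr.2
    refine ⟨min δ₁ δ₂, lt_min hδ₁ hδ₂, fun v hv => ⟨?_, ?_⟩⟩
    · exact h₁ ⟨hv.1, lt_of_lt_of_le hv.2 (add_le_add_right (min_le_left _ _) r)⟩
    · exact h₂ ⟨hv.1, lt_of_lt_of_le hv.2 (add_le_add_right (min_le_right _ _) r)⟩
  | sUnion S _ ih =>
    intro r hr
    obtain ⟨s, hsS, hrs⟩ := hr
    obtain ⟨δ, hδ, hsub⟩ := ih s hsS r hrs
    exact ⟨δ, hδ, fun t ht => ⟨s, hsS, hsub ht⟩⟩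

lemma sorg_tail {U : Set ℝ} (h : IsOpen[sorgenfreyTop] U) :
    ∀ r ∈ U, ∃ δ > 0, Set.Ico r (r + δ) ⊆ U := sorg_tail_aux h

lemma cont_preimage {X : Type*} {τ : TopologicalSpace X} {f : ℝ → X}
    (hc : @Continuous ℝ X sorgenfreyTop τ f) {O : Set X} (hO : IsOpen[τ] O) :
    IsOpen[sorgenfreyTop] (f ⁻¹' O) := @Continuous.isOpen_preimage ℝ X sorgenfreyTop τ f hc O hO

lemma sorg_basic (a b : ℝ) : IsOpen[sorgenfreyTop] (Set.Ico a b) :=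
  TopologicalSpace.GenerateOpen.basic _ ⟨a, b, rfl⟩

lemma sorg_Ioo (a b : ℝ) : IsOpen[sorgenfreyTop] (Set.Ioo a b) := by
  have heq : Set.Ioo a b = ⋃₀ {s : Set ℝ | ∃ x ∈ Set.Ioo a b, s = Set.Ico x b} := by
    ext t
    simp only [Set.mem_sUnion, Set.mem_setOf_eq, Set.mem_Ioo, Set.mem_Ico]
    constructor
    · rintro ⟨h1, h2⟩
      exact ⟨Set.Ico t b, ⟨t, ⟨h1, h2⟩, rfl⟩, le_refl t, h2⟩
    · rintro ⟨s, ⟨x, ⟨hx1, hx2⟩, rfl⟩, ht1, ht2⟩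
      exact ⟨lt_of_lt_of_le hx1 ht1, ht2⟩
  rw [heq]
  exact TopologicalSpace.GenerateOpen.sUnion _ (by
    rintro s ⟨x, _, rfl⟩
    exact sorg_basic x b)

/-- Auxiliary set: points `u` such that every point `t` of the Sorgenfrey tail of length
`1/(n+1)` at `u` whose image is in `Q` and differs from `f u` satisfies `R (f u) (f t)`. -/
def auxSet {X : Type*} (f : ℝ → X) (Q : Set X) (R : X → X → Prop) (n : ℕ) : Set ℝ :=
  {u | ∀ t : ℝ, u ≤ t → t < u + 1 / ((n : ℝ) + 1) → f t ∈ Q → f t ≠ f u → R (f u) (f t)}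

lemma key_lemma {X : Type*} (τ : TopologicalSpace X) (Q : Set X) (R : X → X → Prop)
    (hR : ∀ x y : X, R x y → ¬ R y x)
    (f : ℝ → X) (hc : @Continuous ℝ X sorgenfreyTop τ f)
    (ho : @IsOpenMap ℝ X sorgenfreyTop τ f)
    (B : Set X) (hB : @Dense X τ B) (hBleft : ∀ x ∈ B, LooksLeft τ Q R x)
    (n₀ : ℕ) {a b : ℝ} (hab : a < b)
    (hdense : ∀ c d : ℝ, a ≤ c → c < d → d ≤ b →
      ∃ u, c < u ∧ u < d ∧ u ∈ auxSet f Q R n₀) : False := by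
  have hmid : f ((a + b) / 2) ∈ f '' Set.Ioo a b :=
    ⟨(a + b) / 2, ⟨by linarith, by linarith⟩, rfl⟩
  obtain ⟨x, hxB, hxim⟩ := hB.exists_mem_open (ho _ (sorg_Ioo a b)) ⟨_, hmid⟩
  obtain ⟨r, hrIoo, rfl⟩ := hxim
  set ε₀ : ℝ := min (1 / ((n₀ : ℝ) + 1)) (b - r) with hε₀def
  have hn₀pos : (0 : ℝ) < 1 / ((n₀ : ℝ) + 1) := by positivity
  have hε₀pos : 0 < ε₀ := lt_min hn₀pos (by linarith [hrIoo.2])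
  have hε₀le : ε₀ ≤ 1 / ((n₀ : ℝ) + 1) := min_le_left _ _
  have hε₀b : r + ε₀ ≤ b := by
    have := min_le_right (1 / ((n₀ : ℝ) + 1)) (b - r); linarith
  have hUopen := ho _ (sorg_basic r (r + ε₀))
  have hxU : f r ∈ f '' Set.Ico r (r + ε₀) := ⟨r, ⟨le_refl r, by linarith⟩, rfl⟩
  obtain ⟨-, hsecond⟩ := hBleft _ hxB
  obtain ⟨y, hy, hN⟩ := hsecond _ hUopen hxU
  obtain ⟨⟨hyU, -⟩, hyQ⟩ := hy
  obtain ⟨s, hsIco, rfl⟩ := hyU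
  letI : TopologicalSpace X := τ
  obtain ⟨O, hON, hOo, hOx⟩ := mem_nhds_iff.mp hN
  obtain ⟨δ', hδ'pos, htail⟩ := sorg_tail (cont_preimage hc hOo) r hOx
  set δ : ℝ := min δ' ε₀ with hδdef
  have hδpos : 0 < δ := lt_min hδ'pos hε₀pos
  have hδε₀ : δ ≤ ε₀ := min_le_right _ _
  have hRy : ∀ t : ℝ, r ≤ t → t < r + δ → R (f s) (f t) := by
    intro t h1 h2
    have hδ' : δ ≤ δ' := min_le_left _ _
    exact hON (htail ⟨h1, by linarith⟩)
  by_cases hcase : s < r + δ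
  · exact hR _ _ (hRy s hsIco.1 hcase) (hRy s hsIco.1 hcase)
  · push_neg at hcase
    obtain ⟨u, hu1, hu2, huR⟩ := hdense (r + δ / 2) (r + δ)
      (by linarith [hrIoo.1]) (by linarith) (by linarith)
    have h1 : R (f s) (f u) := hRy u (by linarith) hu2
    have hneq : f s ≠ f u := by
      intro e; rw [← e] at h1; exact hR _ _ h1 h1
    have h2 : R (f u) (f s) :=
      huR s (by linarith) (by have := hsIco.2; linarith) hyQ hneq
    exact hR _ _ h2 h1

/-- If a Hausdorff space is `R`-bidirected along a dense subset `Q` for some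
asymmetric relation `R`, then it is not a continuous open image of the
Sorgenfrey line. -/
theorem stmt14 {X : Type*} (τ : TopologicalSpace X) (hT2 : @T2Space X τ)
    (Q : Set X) (hQ : @Dense X τ Q) (R : X → X → Prop)
    (hR : ∀ x y : X, R x y → ¬ R y x) (h : Bidirected τ Q R) :
    ¬ ∃ f : ℝ → X, @Continuous ℝ X sorgenfreyTop τ f ∧
      @IsOpenMap ℝ X sorgenfreyTop τ f ∧ Function.Surjective f := by
  rintro ⟨f, hc, ho, -⟩
  obtain ⟨Al, Ar, hAl, hAr, huniv, -, hlr, hll⟩ := h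
  have hcov : (⋃ i : ℕ ⊕ ℕ, Sum.elim (fun n => closure (auxSet f Q (flip R) n))
      (fun n => closure (auxSet f Q R n)) i) = Set.univ := by
    rw [Set.eq_univ_iff_forall]
    intro u
    rw [Set.mem_iUnion]
    have hmem : f u ∈ Al ∪ Ar := huniv ▸ Set.mem_univ (f u)
    rcases hmem with hmem | hmem
    · obtain ⟨⟨U₀, hU₀o, hU₀m, hU₀R⟩, -⟩ := hll _ hmem
      obtain ⟨δ, hδ, hsub⟩ := sorg_tail (cont_preimage hc hU₀o) u hU₀m
      obtain ⟨n, hn⟩ := exists_nat_one_div_lt hδ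
      refine ⟨Sum.inl n, subset_closure ?_⟩
      intro t h1 h2 h3 h4
      exact hU₀R (f t) ⟨⟨hsub ⟨h1, by linarith⟩, by simpa using h4⟩, h3⟩
    · obtain ⟨⟨U₀, hU₀o, hU₀m, hU₀R⟩, -⟩ := hlr _ hmem
      obtain ⟨δ, hδ, hsub⟩ := sorg_tail (cont_preimage hc hU₀o) u hU₀m
      obtain ⟨n, hn⟩ := exists_nat_one_div_lt hδ
      refine ⟨Sum.inr n, subset_closure ?_⟩
      intro t h1 h2 h3 h4
      exact hU₀R (f t) ⟨⟨hsub ⟨h1, by linarith⟩, by simpa using h4⟩, h3⟩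
  have hdense_of : ∀ S : Set ℝ, (interior (closure S)).Nonempty →
      ∃ a b : ℝ, a < b ∧ ∀ c d : ℝ, a ≤ c → c < d → d ≤ b →
        ∃ u, c < u ∧ u < d ∧ u ∈ S := by
    rintro S ⟨x₀, hx₀⟩
    have h1 : closure S ∈ 𝓝 x₀ := mem_interior_iff_mem_nhds.mp hx₀
    obtain ⟨ε, hε, hball⟩ := Metric.mem_nhds_iff.mp h1
    rw [Real.ball_eq_Ioo] at hball
    refine ⟨x₀ - ε, x₀ + ε, by linarith, ?_⟩
    intro c d hac hcd hdb
    have hm : (c + d) / 2 ∈ closure S := hball ⟨by linarith, by linarith⟩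
    obtain ⟨v, hvIoo, hvS⟩ := mem_closure_iff.mp hm (Set.Ioo c d) isOpen_Ioo
      ⟨by linarith, by linarith⟩
    exact ⟨v, hvIoo.1, hvIoo.2, hvS⟩
  obtain ⟨i, hi⟩ := nonempty_interior_of_iUnion_of_closed
    (f := Sum.elim (fun n => closure (auxSet f Q (flip R) n))
      (fun n => closure (auxSet f Q R n)))
    (fun i => by cases i <;> exact isClosed_closure) hcov
  cases i with
  | inl n =>
    obtain ⟨a, b, hab, hdense⟩ := hdense_of _ hi
    exact key_lemma τ Q (flip R) (fun x y h h' => hR y x h h') f hc ho Ar hAr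
      (fun x hx => hlr x hx) n hab hdense
  | inr n =>
    obtain ⟨a, b, hab, hdense⟩ := hdense_of _ hi
    exact key_lemma τ Q R hR f hc ho Al hAl hll n hab hdense
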